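/- Let a ∈ ℝⁿ with a_j > 0 for all j, n ≥ 2, and γ ∈ ℝⁿ with γ_n < 0 and γⱼ > 0 for j < n. Then the matrix aaᵀ + Diag(γ) is positive semidefinite if and only if γ_n ≥ −a_n² / (1 + ∑_{j<n} aⱼ²/γⱼ). -/

import Mathlib

open Finset Matrix in
theorem quadform_aux (n : ℕ) (a γ : Fin (n+1) → ℝ) (x : Fin (n+1) → ℝ) :
    dotProduct (star x) ((Matrix.of (fun i j => a i * a j) + Matrix.diagonal γ) *ᵥ x)
      = (∑ j, a j * x j)^2 + ∑ j, γ j * x j^2 := by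
  simp only [star_trivial, Matrix.mulVec, dotProduct, Matrix.add_apply, Matrix.of_apply,
    Matrix.diagonal_apply, add_mul, Finset.sum_add_distrib, mul_add]
  rw [sq, Finset.sum_mul_sum]
  congr 1
  · apply Finset.sum_congr rfl; intro i _
    rw [Finset.mul_sum]; apply Finset.sum_congr rfl; intro j _; ring
  · apply Finset.sum_congr rfl; intro i _
    rw [Finset.mul_sum, Finset.sum_eq_single i]
    · simp; ring
    · intro b _ hb; simp [Ne.symm hb]
    · simp

open Finset in
/-- Let a ∈ ℝ^{n+1} with strictly positive entries and γ with γ_{last} < 0 and γⱼ > 0 for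
the other indices. Then aaᵀ + Diag(γ) ⪰ 0 iff
γ_{last} ≥ −a_{last}²/(1 + ∑_{j ≠ last} aⱼ²/γⱼ). -/
theorem stmt_11 (n : ℕ) (hn : 1 ≤ n) (a : Fin (n + 1) → ℝ) (ha : ∀ j, 0 < a j)
    (γ : Fin (n + 1) → ℝ) (hγlast : γ (Fin.last n) < 0)
    (hγ : ∀ j, j ≠ Fin.last n → 0 < γ j) :
    (Matrix.of (fun i j => a i * a j) + Matrix.diagonal γ).PosSemidef ↔
      γ (Fin.last n) ≥
        -(a (Fin.last n)) ^ 2 / (1 + ∑ j ∈ univ.erase (Fin.last n), (a j) ^ 2 / γ j) := by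
  set L := Fin.last n with hL
  set S := ∑ j ∈ univ.erase L, (a j) ^ 2 / γ j with hSdef
  have hSnonneg : 0 ≤ S := Finset.sum_nonneg fun j hj =>
    div_nonneg (sq_nonneg _) (hγ j (Finset.ne_of_mem_erase hj)).le
  have h1S : (0:ℝ) < 1 + S := by linarith
  rw [Matrix.posSemidef_iff_dotProduct_mulVec]
  constructor
  · rintro ⟨-, hpsd⟩
    set lam := a L / (1 + S) with hlam
    set x : Fin (n+1) → ℝ := fun j => if j = L then 1 else -lam * a j / γ j with hx
    have key := hpsd x
    rw [quadform_aux] at key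
    have hsum1 : ∑ j, a j * x j = a L - lam * S := by
      rw [← Finset.add_sum_erase _ _ (Finset.mem_univ L)]
      simp only [hx, if_pos rfl, mul_one]
      have : ∀ j ∈ univ.erase L, a j * (if j = L then (1:ℝ) else -lam * a j / γ j)
          = -(lam * (a j ^ 2 / γ j)) := by
        intro j hj
        have hj' := Finset.ne_of_mem_erase hj
        have hγj := (hγ j hj').ne'
        rw [if_neg hj']
        ring
      rw [Finset.sum_congr rfl this, Finset.sum_neg_distrib, ← Finset.mul_sum]
      ring
    have hsum2 : ∑ j, γ j * x j ^ 2 = γ L + lam ^ 2 * S := by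
      rw [← Finset.add_sum_erase _ _ (Finset.mem_univ L)]
      simp only [hx, if_pos rfl, one_pow, mul_one]
      congr 1
      have : ∀ j ∈ univ.erase L, γ j * (if j = L then (1:ℝ) else -lam * a j / γ j) ^ 2
          = lam ^ 2 * (a j ^ 2 / γ j) := by
        intro j hj
        have hj' := Finset.ne_of_mem_erase hj
        have hγj := (hγ j hj').ne'
        rw [if_neg hj']
        field_simp
      rw [Finset.sum_congr rfl this, ← Finset.mul_sum]
    rw [hsum1, hsum2] at key
    have h1S' : (1 + S) ≠ 0 := h1S.ne'
    have e : a L - lam * S = a L / (1 + S) := by rw [hlam]; field_simp; ring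
    rw [e, hlam] at key
    have key2 : 0 ≤ (a L) ^ 2 + γ L * (1 + S) := by
      have := mul_nonneg key h1S.le
      have e2 : ((a L / (1 + S)) ^ 2 + (γ L + (a L / (1 + S)) ^ 2 * S)) * (1 + S)
          = (a L) ^ 2 + γ L * (1 + S) := by field_simp; ring
      rw [e2] at this
      exact this
    rw [ge_iff_le, div_le_iff₀ h1S]
    linarith
  · intro h
    constructor
    · apply Matrix.IsHermitian.add
      · ext i j
        simp [Matrix.conjTranspose_apply, mul_comm]
      · exact Matrix.isHermitian_diagonal _
    intro x
    rw [quadform_aux]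
    set u := ∑ j ∈ univ.erase L, a j * x j with hu
    set Q := ∑ j ∈ univ.erase L, γ j * x j ^ 2 with hQ
    have hQnonneg : 0 ≤ Q := Finset.sum_nonneg fun j hj =>
      mul_nonneg (hγ j (Finset.ne_of_mem_erase hj)).le (sq_nonneg _)
    have hsplit1 : ∑ j, a j * x j = a L * x L + u := by
      rw [← Finset.add_sum_erase _ _ (Finset.mem_univ L)]
    have hsplit2 : ∑ j, γ j * x j ^ 2 = γ L * x L ^ 2 + Q := by
      rw [← Finset.add_sum_erase _ _ (Finset.mem_univ L)]
    rw [hsplit1, hsplit2]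
    -- Cauchy-Schwarz : u^2 ≤ S * Q
    have hCS : u ^ 2 ≤ S * Q := by
      have := Finset.sum_mul_sq_le_sq_mul_sq (univ.erase L)
        (fun j => a j / Real.sqrt (γ j)) (fun j => Real.sqrt (γ j) * x j)
      have e1 : ∀ j ∈ univ.erase L,
          (a j / Real.sqrt (γ j)) * (Real.sqrt (γ j) * x j) = a j * x j := by
        intro j hj
        have hγj : (0:ℝ) < γ j := hγ j (Finset.ne_of_mem_erase hj)
        have hs : Real.sqrt (γ j) ≠ 0 := (Real.sqrt_pos.mpr hγj).ne'
        field_simp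
      have e2 : ∀ j ∈ univ.erase L,
          (a j / Real.sqrt (γ j)) ^ 2 = a j ^ 2 / γ j := by
        intro j hj
        have hγj : (0:ℝ) < γ j := hγ j (Finset.ne_of_mem_erase hj)
        rw [div_pow, Real.sq_sqrt hγj.le]
      have e3 : ∀ j ∈ univ.erase L,
          (Real.sqrt (γ j) * x j) ^ 2 = γ j * x j ^ 2 := by
        intro j hj
        have hγj : (0:ℝ) < γ j := hγ j (Finset.ne_of_mem_erase hj)
        rw [mul_pow, Real.sq_sqrt hγj.le]
      rw [Finset.sum_congr rfl e1, Finset.sum_congr rfl e2, Finset.sum_congr rfl e3] at this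
      exact this
    have hγL : -(a L)^2 ≤ γ L * (1 + S) := by
      rw [ge_iff_le, div_le_iff₀ h1S] at h
      linarith
    -- main inequality
    set t := x L with ht
    have h1 : (0:ℝ) ≤ ((1+S)*u + S*(a L)*t)^2 := sq_nonneg _
    have h2 : (0:ℝ) ≤ (1+S)*(S*Q - u^2) := mul_nonneg h1S.le (by linarith)
    have h3 : (0:ℝ) ≤ (γ L*(1+S) + (a L)^2) * t^2 * S :=
      mul_nonneg (mul_nonneg (by linarith) (sq_nonneg _)) hSnonneg
    have hSpos : 0 < S := by
      apply Finset.sum_pos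
      · intro j hj
        exact div_pos (pow_pos (ha j) 2) (hγ j (Finset.ne_of_mem_erase hj))
      · refine ⟨0, Finset.mem_erase.mpr ⟨?_, Finset.mem_univ _⟩⟩
        rw [hL]
        intro hcon
        have := congrArg Fin.val hcon
        simp [Fin.last] at this
        omega
    have hSS : (0:ℝ) < S * (1 + S) := mul_pos hSpos h1S
    have big : 0 ≤ S * (1 + S) * ((a L * t + u) ^ 2 + (γ L * t ^ 2 + Q)) := by
      nlinarith [h1, h2, h3]
    nlinarith [big, hSS]
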